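/- Suppose that for the indices n and n+1 the approximate solve satisfies ‖p̃∞^{(m+1)} − p̃^{(m+1)}‖_{R*TR} ≤ ε‖p̃∞^{(m+1)} − p̃^{(m)}‖_{R*TR} (m = n−1, n), and that q̃^{(m+1)} = ((1−α)Id − αΠS)q̃^{(m)} − 2αTR(p̃^{(m+1)} − p̃∞^{(m+1)}) + αg for m = n−1, n. Then ‖q̃^{(n+1)} − q̃^{(n)}‖_{T⁻¹} ≤ (ρ + 2αε)‖q̃^{(n)} − q̃^{(n−1)}‖_{T⁻¹} + 2α(1+ε)‖p̃∞^{(n)} − p̃^{(n)}‖_{R*TR}. -/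

import Mathlib

set_option linter.unusedSectionVars false
set_option maxHeartbeats 1000000

noncomputable section
open scoped InnerProductSpace
open LinearMap

variable {V W : Type*}
  [NormedAddCommGroup V] [InnerProductSpace ℂ V] [FiniteDimensional ℂ V]
  [NormedAddCommGroup W] [InnerProductSpace ℂ W] [FiniteDimensional ℂ W]

/-- The norm `‖p‖_{T⁻¹} := ⟨T⁻¹p, p⟩^{1/2}` on `W`. -/
def tinvNorm (T : W →ₗ[ℂ] W) [Invertible T] (p : W) : ℝ :=
  Real.sqrt (⟪(⅟T) p, p⟫_ℂ).re

/-- The operator `R*TR : V → V`. -/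
def rtrOp (T : W →ₗ[ℂ] W) (R : V →ₗ[ℂ] W) : V →ₗ[ℂ] V :=
  adjoint R ∘ₗ T ∘ₗ R

/-- The norm `‖x‖_{R*TR} := ⟨(R*TR)x, x⟩^{1/2}` on `V`. -/
def rtrNorm (T : W →ₗ[ℂ] W) (R : V →ₗ[ℂ] W) (x : V) : ℝ :=
  Real.sqrt (⟪(rtrOp T R) x, x⟫_ℂ).re

/-- The exchange operator `Π := 2TR(R*TR)⁻¹R* − Id : W → W`. -/
def exchangeOp (T : W →ₗ[ℂ] W) (R : V →ₗ[ℂ] W) [Invertible (rtrOp T R)] : W →ₗ[ℂ] W :=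
  (2 : ℂ) • (T ∘ₗ R ∘ₗ ⅟(rtrOp T R) ∘ₗ adjoint R) - LinearMap.id

/-- `ρ := sup_{q ≠ 0} ‖((1−α)Id − αΠS)q‖_{T⁻¹} / ‖q‖_{T⁻¹}`. -/
def rhoSup (T : W →ₗ[ℂ] W) [Invertible T] (R : V →ₗ[ℂ] W) [Invertible (rtrOp T R)]
    (S : W →ₗ[ℂ] W) (α : ℝ) : ℝ :=
  ⨆ q : {q : W // q ≠ 0},
    tinvNorm T ((1 - α) • (q : W) - α • exchangeOp T R (S (q : W))) / tinvNorm T (q : W)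

/- ### Auxiliary lemmas about quadratic-form norms -/
section Generic
variable {E : Type*} [NormedAddCommGroup E] [InnerProductSpace ℂ E] [FiniteDimensional ℂ E]

/-- Quadratic-form "norm" associated to an operator `A`. -/
def qnorm (A : E →ₗ[ℂ] E) (x : E) : ℝ := Real.sqrt (⟪A x, x⟫_ℂ).re

lemma qnorm_nonneg (A : E →ₗ[ℂ] E) (x : E) : 0 ≤ qnorm A x := Real.sqrt_nonneg _

lemma creal_smul (r : ℝ) (x : E) : r • x = (r : ℂ) • x := rfl

variable (A : E →ₗ[ℂ] E)

lemma qre_nonneg (hpos : ∀ x : E, x ≠ 0 → 0 < (⟪A x, x⟫_ℂ).re) (x : E) :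
    0 ≤ (⟪A x, x⟫_ℂ).re := by
  rcases eq_or_ne x 0 with h | h
  · simp [h]
  · exact (hpos x h).le

lemma qre_symm (hA : adjoint A = A) (x y : E) :
    (⟪A x, y⟫_ℂ).re = (⟪A y, x⟫_ℂ).re := by
  have h1 : ⟪A x, y⟫_ℂ = ⟪x, A y⟫_ℂ := by
    conv_lhs => rw [← hA]
    exact adjoint_inner_left A y x
  rw [h1, ← inner_conj_symm, Complex.conj_re]

lemma qre_expand (hA : adjoint A = A) (x y : E) :
    (⟪A (x + y), x + y⟫_ℂ).re =
      (⟪A x, x⟫_ℂ).re + 2 * (⟪A x, y⟫_ℂ).re + (⟪A y, y⟫_ℂ).re := by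
  rw [map_add, inner_add_left, inner_add_right, inner_add_right]
  simp only [Complex.add_re]
  linarith [qre_symm A hA y x]

lemma qre_smul_real (r : ℝ) (x y : E) :
    (⟪A (r • x), y⟫_ℂ).re = r * (⟪A x, y⟫_ℂ).re := by
  rw [creal_smul, map_smul, inner_smul_left]
  simp [Complex.conj_ofReal]

lemma qre_smul_real_right (r : ℝ) (x y : E) :
    (⟪A x, r • y⟫_ℂ).re = r * (⟪A x, y⟫_ℂ).re := by
  rw [creal_smul, inner_smul_right]
  simp

lemma qnorm_sq (hpos : ∀ x : E, x ≠ 0 → 0 < (⟪A x, x⟫_ℂ).re) (x : E) :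
    qnorm A x ^ 2 = (⟪A x, x⟫_ℂ).re :=
  Real.sq_sqrt (qre_nonneg A hpos x)

lemma qnorm_cs (hA : adjoint A = A) (hpos : ∀ x : E, x ≠ 0 → 0 < (⟪A x, x⟫_ℂ).re)
    (x y : E) : (⟪A x, y⟫_ℂ).re ≤ qnorm A x * qnorm A y := by
  set a := (⟪A x, x⟫_ℂ).re with ha
  set b := (⟪A x, y⟫_ℂ).re with hb
  set c := (⟪A y, y⟫_ℂ).re with hc
  have ha0 : 0 ≤ a := qre_nonneg A hpos x
  have hc0 : 0 ≤ c := qre_nonneg A hpos y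
  have key : ∀ t : ℝ, 0 ≤ a * (t * t) + (2 * b) * t + c := by
    intro t
    have h0 := qre_nonneg A hpos (t • x + y)
    rw [qre_expand A hA, qre_smul_real, qre_smul_real_right, qre_smul_real] at h0
    nlinarith [h0]
  have hd := discrim_le_zero key
  rw [discrim] at hd
  have hb2 : b ^ 2 ≤ a * c := by nlinarith
  calc b ≤ |b| := le_abs_self b
    _ = Real.sqrt (b ^ 2) := (Real.sqrt_sq_eq_abs b).symm
    _ ≤ Real.sqrt (a * c) := Real.sqrt_le_sqrt hb2
    _ = qnorm A x * qnorm A y := by rw [Real.sqrt_mul ha0]; rfl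

lemma qnorm_add_le (hA : adjoint A = A) (hpos : ∀ x : E, x ≠ 0 → 0 < (⟪A x, x⟫_ℂ).re)
    (x y : E) : qnorm A (x + y) ≤ qnorm A x + qnorm A y := by
  have h1 : (⟪A (x + y), x + y⟫_ℂ).re ≤ (qnorm A x + qnorm A y) ^ 2 := by
    rw [qre_expand A hA]
    have hcs := qnorm_cs A hA hpos x y
    have hx := qnorm_sq A hpos x
    have hy := qnorm_sq A hpos y
    nlinarith
  calc qnorm A (x + y) = Real.sqrt (⟪A (x + y), x + y⟫_ℂ).re := rfl
    _ ≤ Real.sqrt ((qnorm A x + qnorm A y) ^ 2) := Real.sqrt_le_sqrt h1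
    _ = qnorm A x + qnorm A y := by
        rw [Real.sqrt_sq (add_nonneg (qnorm_nonneg A x) (qnorm_nonneg A y))]

lemma qnorm_smul (r : ℝ) (x : E) : qnorm A (r • x) = |r| * qnorm A x := by
  unfold qnorm
  rw [qre_smul_real, qre_smul_real_right]
  rw [← mul_assoc, ← Real.sqrt_sq_eq_abs, ← Real.sqrt_mul (by positivity)]
  ring_nf

lemma qnorm_neg (x : E) : qnorm A (-x) = qnorm A x := by
  have : (-1 : ℝ) • x = -x := by simp
  rw [← this, qnorm_smul]; simp

lemma qnorm_sub_le (hA : adjoint A = A) (hpos : ∀ x : E, x ≠ 0 → 0 < (⟪A x, x⟫_ℂ).re)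
    (x y : E) : qnorm A (x - y) ≤ qnorm A x + qnorm A y := by
  rw [sub_eq_add_neg]
  calc qnorm A (x + -y) ≤ qnorm A x + qnorm A (-y) := qnorm_add_le A hA hpos x (-y)
    _ = qnorm A x + qnorm A y := by rw [qnorm_neg]

lemma qnorm_pos (hpos : ∀ x : E, x ≠ 0 → 0 < (⟪A x, x⟫_ℂ).re) {x : E} (hx : x ≠ 0) :
    0 < qnorm A x := Real.sqrt_pos.mpr (hpos x hx)

lemma qnorm_zero : qnorm A (0 : E) = 0 := by simp [qnorm]

end Generic

/- ### Operator-specific lemmas -/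

lemma adjoint_invOf (T : W →ₗ[ℂ] W) [Invertible T] (hTsa : adjoint T = T) :
    adjoint (⅟T) = ⅟T := by
  have e1 : adjoint (⅟T) * T = 1 := by
    have h := congrArg adjoint (mul_invOf_self T)
    rw [Module.End.mul_eq_comp, adjoint_comp, hTsa] at h
    rw [← Module.End.mul_eq_comp] at h
    rw [show adjoint (1 : W →ₗ[ℂ] W) = 1 by rw [← star_eq_adjoint, star_one]] at h
    exact h
  calc adjoint (⅟T) = adjoint (⅟T) * (T * ⅟T) := by rw [mul_invOf_self, mul_one]
    _ = (adjoint (⅟T) * T) * ⅟T := (mul_assoc _ _ _).symm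
    _ = ⅟T := by rw [e1, one_mul]

lemma invOf_apply_self (T : W →ₗ[ℂ] W) [Invertible T] (w : W) : (⅟T) (T w) = w := by
  rw [← Module.End.mul_apply, invOf_mul_self, Module.End.one_apply]

lemma apply_invOf_self (T : W →ₗ[ℂ] W) [Invertible T] (w : W) : T ((⅟T) w) = w := by
  rw [← Module.End.mul_apply, mul_invOf_self, Module.End.one_apply]

lemma tinv_pos (T : W →ₗ[ℂ] W) [Invertible T]
    (hTpos : ∀ w : W, w ≠ 0 → 0 < (⟪T w, w⟫_ℂ).re) :
    ∀ p : W, p ≠ 0 → 0 < (⟪(⅟T) p, p⟫_ℂ).re := by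
  intro p hp
  set w := (⅟T) p with hw
  have hTw : T w = p := apply_invOf_self T p
  have hw0 : w ≠ 0 := by
    intro h
    apply hp
    rw [← hTw, h, map_zero]
  have h3 : (⟪(⅟T) p, p⟫_ℂ).re = (⟪T w, w⟫_ℂ).re := by
    have h2 : ⟪(⅟T) p, p⟫_ℂ = ⟪w, T w⟫_ℂ := by rw [← hw, hTw]
    rw [h2, ← inner_conj_symm, Complex.conj_re]
  rw [h3]
  exact hTpos w hw0

lemma rtr_adj (T : W →ₗ[ℂ] W) (R : V →ₗ[ℂ] W) (hTsa : adjoint T = T) :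
    adjoint (rtrOp T R) = rtrOp T R := by
  unfold rtrOp
  rw [adjoint_comp, adjoint_comp, adjoint_adjoint, hTsa, comp_assoc]

lemma rtr_inner (T : W →ₗ[ℂ] W) (R : V →ₗ[ℂ] W) (x y : V) :
    ⟪(rtrOp T R) x, y⟫_ℂ = ⟪T (R x), R y⟫_ℂ := by
  unfold rtrOp
  simp only [comp_apply]
  exact adjoint_inner_left R y (T (R x))

lemma rtr_pos (T : W →ₗ[ℂ] W) (R : V →ₗ[ℂ] W) (hR : Function.Injective R)
    (hTpos : ∀ w : W, w ≠ 0 → 0 < (⟪T w, w⟫_ℂ).re) :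
    ∀ x : V, x ≠ 0 → 0 < (⟪(rtrOp T R) x, x⟫_ℂ).re := by
  intro x hx
  rw [rtr_inner]
  exact hTpos (R x) (by rwa [Ne, _root_.map_eq_zero_iff R hR])

lemma tinvNorm_eq (T : W →ₗ[ℂ] W) [Invertible T] : tinvNorm T = qnorm (⅟T) := rfl

lemma rtrNorm_eq (T : W →ₗ[ℂ] W) (R : V →ₗ[ℂ] W) : rtrNorm T R = qnorm (rtrOp T R) := rfl

/-- `‖TRx‖_{T⁻¹} = ‖x‖_{R*TR}`. -/
lemma tinv_TR (T : W →ₗ[ℂ] W) [Invertible T] (R : V →ₗ[ℂ] W) (x : V) :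
    tinvNorm T (T (R x)) = rtrNorm T R x := by
  unfold tinvNorm rtrNorm
  congr 1
  rw [invOf_apply_self, rtr_inner, ← inner_conj_symm, Complex.conj_re]

variable (T : W →ₗ[ℂ] W) [Invertible T] (R : V →ₗ[ℂ] W)

/-- the key inner-product identity `⟪T⁻¹w, TRx⟫ = ⟪w, Rx⟫`. -/
lemma tinv_inner_TR (hTsa : adjoint T = T) (w : W) (x : V) :
    ⟪(⅟T) w, T (R x)⟫_ℂ = ⟪w, R x⟫_ℂ := by
  conv_lhs => rw [← adjoint_invOf T hTsa]
  rw [adjoint_inner_left, invOf_apply_self]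

variable [Invertible (rtrOp T R)]

/-- `M x = R* w` implies `re ⟪Mx, x⟫ = re ⟪w, Rx⟫`. -/
lemma proj_re (w : W) :
    (⟪rtrOp T R ((⅟(rtrOp T R)) (adjoint R w)), (⅟(rtrOp T R)) (adjoint R w)⟫_ℂ).re
      = (⟪w, R ((⅟(rtrOp T R)) (adjoint R w))⟫_ℂ).re := by
  rw [apply_invOf_self (rtrOp T R)]
  rw [adjoint_inner_left]

/-- Projection bound: `‖(R*TR)⁻¹ R* w‖_{R*TR} ≤ ‖w‖_{T⁻¹}`. -/
lemma proj_bound (hTsa : adjoint T = T)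
    (hTpos : ∀ w : W, w ≠ 0 → 0 < (⟪T w, w⟫_ℂ).re)
    (hR : Function.Injective R) (w : W) :
    rtrNorm T R ((⅟(rtrOp T R)) (adjoint R w)) ≤ tinvNorm T w := by
  set x := (⅟(rtrOp T R)) (adjoint R w) with hx
  have hMpos := rtr_pos T R hR hTpos
  have ha : rtrNorm T R x ^ 2 = (⟪w, R x⟫_ℂ).re := by
    rw [rtrNorm_eq, qnorm_sq (rtrOp T R) hMpos, hx, proj_re]
  have hcs : (⟪(⅟T) w, T (R x)⟫_ℂ).re ≤ tinvNorm T w * tinvNorm T (T (R x)) := by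
    rw [tinvNorm_eq]
    exact qnorm_cs (⅟T) (adjoint_invOf T hTsa) (tinv_pos T hTpos) w (T (R x))
  rw [tinv_inner_TR T R hTsa, tinv_TR] at hcs
  have h2 : rtrNorm T R x ^ 2 ≤ tinvNorm T w * rtrNorm T R x := by rw [ha]; exact hcs
  rcases eq_or_lt_of_le (by rw [rtrNorm_eq]; exact qnorm_nonneg _ x :
      (0 : ℝ) ≤ rtrNorm T R x) with h0 | h0
  · rw [← h0]
    rw [tinvNorm_eq]; exact qnorm_nonneg _ w
  · exact le_of_mul_le_mul_right (by nlinarith) h0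

lemma exchangeOp_apply (w : W) :
    exchangeOp T R w = (2 : ℂ) • (T (R ((⅟(rtrOp T R)) (adjoint R w)))) - w := by
  simp [exchangeOp, LinearMap.sub_apply, LinearMap.smul_apply, comp_apply, id_apply]

/-- The exchange operator is an isometry for the `T⁻¹`-norm. -/
lemma exch_isometry (hTsa : adjoint T = T)
    (hTpos : ∀ w : W, w ≠ 0 → 0 < (⟪T w, w⟫_ℂ).re) (w : W) :
    tinvNorm T (exchangeOp T R w) = tinvNorm T w := by
  set x := (⅟(rtrOp T R)) (adjoint R w) with hx
  set u := T (R x) with hu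
  have hval : exchangeOp T R w = (2 : ℂ) • u - w := exchangeOp_apply T R w
  have hinv : (⅟T) ((2 : ℂ) • u - w) = (2 : ℂ) • (R x) - (⅟T) w := by
    rw [map_sub, map_smul, hu, invOf_apply_self]
  -- three real-part identities
  have hC : ⟪(⅟T) w, u⟫_ℂ = ⟪w, R x⟫_ℂ := tinv_inner_TR T R hTsa w x
  have hA : (⟪R x, u⟫_ℂ).re = (⟪w, R x⟫_ℂ).re := by
    have h1 : (⟪R x, u⟫_ℂ).re = (⟪u, R x⟫_ℂ).re := by
      rw [← inner_conj_symm, Complex.conj_re]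
    rw [h1, hu, ← rtr_inner, hx, proj_re]
  have hB : (⟪R x, w⟫_ℂ).re = (⟪w, R x⟫_ℂ).re := by
    rw [← inner_conj_symm, Complex.conj_re]
  -- expand
  have hexp : ⟪(2 : ℂ) • (R x) - (⅟T) w, (2 : ℂ) • u - w⟫_ℂ
      = 4 * ⟪R x, u⟫_ℂ - 2 * ⟪R x, w⟫_ℂ - 2 * ⟪(⅟T) w, u⟫_ℂ + ⟪(⅟T) w, w⟫_ℂ := by
    simp only [inner_sub_left, inner_sub_right, inner_smul_left, inner_smul_right]
    rw [show (starRingEnd ℂ) (2 : ℂ) = 2 from map_ofNat _ 2]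
    ring
  have hre : (⟪(⅟T) (exchangeOp T R w), exchangeOp T R w⟫_ℂ).re
      = (⟪(⅟T) w, w⟫_ℂ).re := by
    rw [hval, hinv, hexp]
    have h4 : ((4 : ℂ) * ⟪R x, u⟫_ℂ).re = 4 * (⟪R x, u⟫_ℂ).re := by
      simp [Complex.mul_re]
    have h5 : ((2 : ℂ) * ⟪R x, w⟫_ℂ).re = 2 * (⟪R x, w⟫_ℂ).re := by
      simp [Complex.mul_re]
    have h6 : ((2 : ℂ) * ⟪(⅟T) w, u⟫_ℂ).re = 2 * (⟪(⅟T) w, u⟫_ℂ).re := by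
      simp [Complex.mul_re]
    simp only [Complex.sub_re, Complex.add_re, h4, h5, h6]
    have h7 : (⟪(⅟T) w, u⟫_ℂ).re = (⟪w, R x⟫_ℂ).re := by rw [hC]
    rw [hA, hB, h7]
    ring
  unfold tinvNorm
  rw [hre]

/-- The `ρ`-bound : `‖(1−α)d − αΠ(Sd)‖_{T⁻¹} ≤ ρ ‖d‖_{T⁻¹}`. -/
lemma rho_bound (hTsa : adjoint T = T)
    (hTpos : ∀ w : W, w ≠ 0 → 0 < (⟪T w, w⟫_ℂ).re)
    (hR : Function.Injective R)
    (S : W →ₗ[ℂ] W) (hS : ∀ w : W, tinvNorm T (S w) ≤ tinvNorm T w)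
    (α : ℝ) (hα : α ∈ Set.Ioo (0 : ℝ) 1) (d : W) :
    tinvNorm T ((1 - α) • d - α • exchangeOp T R (S d)) ≤
      rhoSup T R S α * tinvNorm T d := by
  have hTia := adjoint_invOf T hTsa
  have hTip := tinv_pos T hTpos
  have hbdd : BddAbove (Set.range fun q : {q : W // q ≠ 0} =>
      tinvNorm T ((1 - α) • (q : W) - α • exchangeOp T R (S (q : W))) / tinvNorm T (q : W)) := by
    refine ⟨1, ?_⟩
    rintro _ ⟨q, rfl⟩
    have hq0 : 0 < tinvNorm T (q : W) := by
      rw [tinvNorm_eq]; exact qnorm_pos _ hTip q.2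
    rw [div_le_one hq0]
    have ht : tinvNorm T ((1 - α) • (q : W) - α • exchangeOp T R (S (q : W)))
        ≤ tinvNorm T ((1 - α) • (q : W)) + tinvNorm T (α • exchangeOp T R (S (q : W))) := by
      rw [tinvNorm_eq]
      exact qnorm_sub_le (⅟T) hTia hTip _ _
    have h1 : tinvNorm T ((1 - α) • (q : W)) = (1 - α) * tinvNorm T (q : W) := by
      rw [tinvNorm_eq, qnorm_smul, abs_of_nonneg (by linarith [hα.2])]
    have h2 : tinvNorm T (α • exchangeOp T R (S (q : W)))
        = α * tinvNorm T (S (q : W)) := by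
      rw [tinvNorm_eq, qnorm_smul, abs_of_nonneg (le_of_lt hα.1), ← tinvNorm_eq,
        exch_isometry T R hTsa hTpos]
    have h3 : tinvNorm T (S (q : W)) ≤ tinvNorm T (q : W) := hS _
    calc tinvNorm T ((1 - α) • (q : W) - α • exchangeOp T R (S (q : W)))
        ≤ (1 - α) * tinvNorm T (q : W) + α * tinvNorm T (S (q : W)) := by
          rw [← h1, ← h2]; exact ht
      _ ≤ (1 - α) * tinvNorm T (q : W) + α * tinvNorm T (q : W) := by
          have := hα.1
          nlinarith
      _ = tinvNorm T (q : W) := by ring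
  rcases eq_or_ne d 0 with rfl | hd
  · have hz2 : tinvNorm T (0 : W) = 0 := by rw [tinvNorm_eq, qnorm_zero]
    simp only [map_zero, smul_zero, sub_zero, zero_sub, neg_zero, sub_self]
    rw [hz2, mul_zero]
  · have hled := le_ciSup hbdd ⟨d, hd⟩
    have hd0 : 0 < tinvNorm T d := by rw [tinvNorm_eq]; exact qnorm_pos _ hTip hd
    have : tinvNorm T ((1 - α) • d - α • exchangeOp T R (S d)) / tinvNorm T d
        ≤ rhoSup T R S α := hled
    rw [div_le_iff₀ hd0] at this
    exact this

/-- Main theorem. -/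
theorem richardson_difference_estimate
    (T : W →ₗ[ℂ] W) [Invertible T]
    (hTsa : adjoint T = T)
    (hTpos : ∀ w : W, w ≠ 0 → 0 < (⟪T w, w⟫_ℂ).re)
    (R : V →ₗ[ℂ] W) (hR : Function.Injective R)
    [Invertible (rtrOp T R)]
    (S : W →ₗ[ℂ] W) (hS : ∀ w : W, tinvNorm T (S w) ≤ tinvNorm T w)
    (α : ℝ) (hα : α ∈ Set.Ioo (0 : ℝ) 1) (ε : ℝ) (hε : 0 ≤ ε) (g : W)
    (qNm1 qN qNp1 : W) (pNm1 pN pNp1 : V)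
    (hpcgN : rtrNorm T R ((⅟(rtrOp T R)) (adjoint R (S qNm1)) - pN) ≤
      ε * rtrNorm T R ((⅟(rtrOp T R)) (adjoint R (S qNm1)) - pNm1))
    (hpcgNp1 : rtrNorm T R ((⅟(rtrOp T R)) (adjoint R (S qN)) - pNp1) ≤
      ε * rtrNorm T R ((⅟(rtrOp T R)) (adjoint R (S qN)) - pN))
    (hrecN : qN = (1 - α) • qNm1 - α • exchangeOp T R (S qNm1)
      - (2 * α) • (T (R (pN - (⅟(rtrOp T R)) (adjoint R (S qNm1))))) + α • g)
    (hrecNp1 : qNp1 = (1 - α) • qN - α • exchangeOp T R (S qN)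
      - (2 * α) • (T (R (pNp1 - (⅟(rtrOp T R)) (adjoint R (S qN))))) + α • g) :
    tinvNorm T (qNp1 - qN) ≤
      (rhoSup T R S α + 2 * α * ε) * tinvNorm T (qN - qNm1) +
      2 * α * (1 + ε) * rtrNorm T R ((⅟(rtrOp T R)) (adjoint R (S qNm1)) - pN) := by
  have hTia := adjoint_invOf T hTsa
  have hTip := tinv_pos T hTpos
  have hMadj := rtr_adj T R hTsa
  have hMpos := rtr_pos T R hR hTpos
  set e0 := (⅟(rtrOp T R)) (adjoint R (S qNm1)) with he0
  set e1 := (⅟(rtrOp T R)) (adjoint R (S qN)) with he1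
  set d := qN - qNm1 with hdd
  -- structural identity
  have key : qNp1 - qN =
      ((1 - α) • d - α • exchangeOp T R (S d))
      + (2 * α) • (T (R (e1 - pNp1))) - (2 * α) • (T (R (e0 - pN))) := by
    have h := congrArg₂ (fun a b : W => a - b) hrecNp1 hrecN
    rw [h, hdd]
    simp only [map_sub]
    module
  rw [key]
  -- triangle inequalities
  have t1 : tinvNorm T (((1 - α) • d - α • exchangeOp T R (S d))
      + (2 * α) • (T (R (e1 - pNp1))) - (2 * α) • (T (R (e0 - pN))))
      ≤ tinvNorm T ((1 - α) • d - α • exchangeOp T R (S d))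
        + tinvNorm T ((2 * α) • (T (R (e1 - pNp1))))
        + tinvNorm T ((2 * α) • (T (R (e0 - pN)))) := by
    rw [tinvNorm_eq]
    calc qnorm (⅟T) _ ≤ qnorm (⅟T) (((1 - α) • d - α • exchangeOp T R (S d))
          + (2 * α) • (T (R (e1 - pNp1)))) + qnorm (⅟T) ((2 * α) • (T (R (e0 - pN)))) :=
        qnorm_sub_le (⅟T) hTia hTip _ _
      _ ≤ _ := by
        have := qnorm_add_le (⅟T) hTia hTip ((1 - α) • d - α • exchangeOp T R (S d))
          ((2 * α) • (T (R (e1 - pNp1))))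
        linarith
  -- evaluate the smul norms
  have h2α : (0 : ℝ) ≤ 2 * α := by linarith [hα.1]
  have hsm1 : tinvNorm T ((2 * α) • (T (R (e1 - pNp1))))
      = 2 * α * rtrNorm T R (e1 - pNp1) := by
    rw [tinvNorm_eq, qnorm_smul, abs_of_nonneg h2α, ← tinvNorm_eq, tinv_TR]
  have hsm0 : tinvNorm T ((2 * α) • (T (R (e0 - pN))))
      = 2 * α * rtrNorm T R (e0 - pN) := by
    rw [tinvNorm_eq, qnorm_smul, abs_of_nonneg h2α, ← tinvNorm_eq, tinv_TR]
  -- ρ bound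
  have hrho : tinvNorm T ((1 - α) • d - α • exchangeOp T R (S d))
      ≤ rhoSup T R S α * tinvNorm T d :=
    rho_bound T R hTsa hTpos hR S hS α hα d
  -- pcg bound and splitting e1 - pN
  have he10 : e1 - e0 = (⅟(rtrOp T R)) (adjoint R (S d)) := by
    rw [he1, he0, hdd]
    simp only [map_sub]
  have hsplit : rtrNorm T R (e1 - pN) ≤ tinvNorm T d + rtrNorm T R (e0 - pN) := by
    have htr : rtrNorm T R (e1 - pN) ≤ rtrNorm T R (e1 - e0) + rtrNorm T R (e0 - pN) := by
      have : e1 - pN = (e1 - e0) + (e0 - pN) := by abel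
      rw [this, rtrNorm_eq]
      exact qnorm_add_le (rtrOp T R) hMadj hMpos _ _
    have hpb : rtrNorm T R (e1 - e0) ≤ tinvNorm T d := by
      rw [he10]
      calc rtrNorm T R ((⅟(rtrOp T R)) (adjoint R (S d))) ≤ tinvNorm T (S d) :=
          proj_bound T R hTsa hTpos hR (S d)
        _ ≤ tinvNorm T d := hS d
    linarith
  -- put everything together
  have hr1 : rtrNorm T R (e1 - pNp1) ≤ ε * rtrNorm T R (e1 - pN) := hpcgNp1
  have hnn1 : 0 ≤ rtrNorm T R (e0 - pN) := by rw [rtrNorm_eq]; exact qnorm_nonneg _ _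
  have hnn2 : 0 ≤ tinvNorm T d := by rw [tinvNorm_eq]; exact qnorm_nonneg _ _
  have hnn3 : 0 ≤ rtrNorm T R (e1 - pN) := by rw [rtrNorm_eq]; exact qnorm_nonneg _ _
  have hb : 2 * α * rtrNorm T R (e1 - pNp1) ≤ 2 * α * ε * (tinvNorm T d + rtrNorm T R (e0 - pN)) := by
    have := mul_le_mul_of_nonneg_left hr1 h2α
    have h2 : ε * rtrNorm T R (e1 - pN) ≤ ε * (tinvNorm T d + rtrNorm T R (e0 - pN)) :=
      mul_le_mul_of_nonneg_left hsplit hε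
    nlinarith
  nlinarith [t1, hsm1, hsm0, hrho, hb]
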